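/- Let (Ω, Σ) be a measurable space, let ν be a finite signed measure on (Ω, Σ) with ν(Ω) = 0, and let u : Ω → ℝ be a bounded measurable function such that ν({x ∈ Ω : u(x) ≤ α}) ≥ 0 for every α ∈ ℝ. Then ∫_Ω u dν ≤ 0. -/

import Mathlib

open MeasureTheory Set

/-- The layer-cake lemma of Appendix A.2.2 (adaptation of Theorem 3.3.4 of
Müller–Stoyan). The finite signed measure `ν` on `(Ω, Σ)` is encoded as the
difference `ν₁ − ν₂` of two finite measures. -/
theorem stmt7 {Ω : Type*} [MeasurableSpace Ω]
    (ν₁ ν₂ : Measure Ω) [IsFiniteMeasure ν₁] [IsFiniteMeasure ν₂]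
    (hzero : (ν₁ univ).toReal = (ν₂ univ).toReal)
    (u : Ω → ℝ) (hmeas : Measurable u) (hbd : ∃ C, ∀ x, |u x| ≤ C)
    (hsub : ∀ α : ℝ, (ν₂ {x | u x ≤ α}).toReal ≤ (ν₁ {x | u x ≤ α}).toReal) :
    (∫ x, u x ∂ν₁) - (∫ x, u x ∂ν₂) ≤ 0 := by
  obtain ⟨C, hC⟩ := hbd
  set c : ℝ := C + 1 with hc
  set v : Ω → ℝ := fun x => u x + c with hv
  have hvmeas : Measurable v := hmeas.add measurable_const
  have hv_nn : ∀ x, 0 ≤ v x := by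
    intro x
    have := (abs_le.mp (hC x)).1
    simp only [hv]; linarith
  have hv_bd : ∀ x, v x ≤ 2 * C + 1 := by
    intro x
    have := (abs_le.mp (hC x)).2
    simp only [hv, hc]; linarith
  -- integrability of v
  have hint : ∀ (μ : Measure Ω) [IsFiniteMeasure μ], Integrable v μ := by
    intro μ _
    refine (integrable_const (2 * C + 1)).mono' hvmeas.aestronglyMeasurable ?_
    filter_upwards with x
    rw [Real.norm_eq_abs, abs_of_nonneg (hv_nn x)]
    exact hv_bd x
  have hintu : ∀ (μ : Measure Ω) [IsFiniteMeasure μ], Integrable u μ := by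
    intro μ _
    refine (integrable_const C).mono' hmeas.aestronglyMeasurable ?_
    filter_upwards with x using hC x
  set M : ℝ := 2 * C + 1
  have key : ∀ (μ : Measure Ω) [IsFiniteMeasure μ],
      ∫ x, v x ∂μ = ∫ t in Ioc 0 M, (μ {a | t ≤ v a}).toReal := by
    intro μ _
    exact (hint μ).integral_eq_integral_Ioc_meas_le
      (Filter.Eventually.of_forall hv_nn) (Filter.Eventually.of_forall hv_bd)
  -- compare integrands a.e. on Ioc 0 M
  have compl_eq : ∀ (μ : Measure Ω) [IsFiniteMeasure μ] (t : ℝ),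
      (μ {a | t < v a}).toReal = (μ univ).toReal - (μ {a | v a ≤ t}).toReal := by
    intro μ _ t
    have hs : MeasurableSet {a | v a ≤ t} := hvmeas measurableSet_Iic
    have : {a | t < v a} = {a | v a ≤ t}ᶜ := by ext a; simp [not_le]
    rw [this, measure_compl hs (measure_ne_top μ _),
      ENNReal.toReal_sub_of_le (measure_mono (subset_univ _)) (measure_ne_top μ _)]
  have hsub' : ∀ t : ℝ, (ν₂ {a | v a ≤ t}).toReal ≤ (ν₁ {a | v a ≤ t}).toReal := by
    intro t
    have : {a | v a ≤ t} = {a | u a ≤ t - c} := by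
      ext a; simp only [hv, mem_setOf_eq]; constructor <;> intro <;> linarith
    rw [this]; exact hsub (t - c)
  have mono_ae : ∀ᵐ t ∂(volume.restrict (Ioc 0 M)),
      (ν₁ {a | t ≤ v a}).toReal ≤ (ν₂ {a | t ≤ v a}).toReal := by
    have h1 := meas_le_ae_eq_meas_lt (μ := ν₁) (volume.restrict (Ioc 0 M)) v
    have h2 := meas_le_ae_eq_meas_lt (μ := ν₂) (volume.restrict (Ioc 0 M)) v
    filter_upwards [h1, h2] with t ht1 ht2
    rw [ht1, ht2, compl_eq ν₁ t, compl_eq ν₂ t, hzero]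
    have := hsub' t
    linarith
  -- integrability of integrands on Ioc 0 M
  have intgr : ∀ (μ : Measure Ω) [IsFiniteMeasure μ],
      IntegrableOn (fun t => (μ {a | t ≤ v a}).toReal) (Ioc 0 M) := by
    intro μ _
    have hmble : Measurable fun t => (μ {a | t ≤ v a}).toReal := by
      refine Measurable.ennreal_toReal ?_
      exact Antitone.measurable (fun s t hst => measure_mono (fun a ha => hst.trans ha))
    have hconst : IntegrableOn (fun _ : ℝ => (μ univ).toReal) (Ioc 0 M) volume :=
      integrableOn_const measure_Ioc_lt_top.ne
    refine hconst.mono' hmble.aestronglyMeasurable ?_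
    filter_upwards with t
    rw [Real.norm_eq_abs, abs_of_nonneg ENNReal.toReal_nonneg]
    exact ENNReal.toReal_mono (measure_ne_top μ _) (measure_mono (subset_univ _))
  have hvle : ∫ x, v x ∂ν₁ ≤ ∫ x, v x ∂ν₂ := by
    rw [key ν₁, key ν₂]
    exact integral_mono_ae (intgr ν₁) (intgr ν₂) mono_ae
  -- translate back
  have e1 : ∫ x, v x ∂ν₁ = (∫ x, u x ∂ν₁) + (ν₁ univ).toReal * c := by
    rw [integral_add (hintu ν₁) (integrable_const c), integral_const, smul_eq_mul, measureReal_def]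
  have e2 : ∫ x, v x ∂ν₂ = (∫ x, u x ∂ν₂) + (ν₂ univ).toReal * c := by
    rw [integral_add (hintu ν₂) (integrable_const c), integral_const, smul_eq_mul, measureReal_def]
  rw [e1, e2, hzero] at hvle
  linarith
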